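/- arXiv:2605.11291 — 3 statements merged into one kernel-verified Lean document; each statement's English description precedes it below -/
import Mathlib

section
/- Let k ≥ 1, C ≥ 2, λ₁,…,λ_C ∈ (0,1) with ∑_{i=1}^C λᵢ = 1, and let ψ : ℝ^k → ℝ be argument-wise strictly increasing. If A* ∈ 𝒜* satisfies S(A*) ≤ S(A) for all A ∈ 𝒜*, then zero is an eigenvalue of A*; equivalently, A* is singular, so rank(A*) ≤ C − 1. -/
open Matrix

/-- `ψ : ℝ^k → ℝ` is argument-wise strictly increasing. -/
def ArgwiseStrictMono {k : ℕ} (ψ : (Fin k → ℝ) → ℝ) : Prop :=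
  ∀ (i : Fin k) (t : Fin k → ℝ) (s s' : ℝ), s < s' →
    ψ (Function.update t i s) < ψ (Function.update t i s')

/-- `S(A) = ∑_{i, j₁,…,j_k} (λᵢ ∏ₜ λ_{jₜ}) ψ(A_{i j₁} − 1, …, A_{i j_k} − 1)`. -/
noncomputable def S {k C : ℕ} (ψ : (Fin k → ℝ) → ℝ) (lam : Fin C → ℝ)
    (A : Matrix (Fin C) (Fin C) ℝ) : ℝ :=
  ∑ i : Fin C, ∑ j : Fin k → Fin C,
    (lam i * ∏ t, lam (j t)) * ψ (fun t => A i (j t) - 1)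

/-- `𝒜*` : real symmetric PSD `C×C` matrices with unit diagonal. -/
def AstarSet (C : ℕ) : Set (Matrix (Fin C) (Fin C) ℝ) :=
  {A | A.PosSemidef ∧ ∀ i, A i i = 1}

lemma psi_mono {k : ℕ} {ψ : (Fin k → ℝ) → ℝ} (hm : ArgwiseStrictMono ψ)
    (s s' : Fin k → ℝ) (h : ∀ t, s t ≤ s' t) : ψ s ≤ ψ s' := by
  have key : ∀ F : Finset (Fin k), ψ (fun t => if t ∈ F then s t else s' t) ≤ ψ s' := by
    intro F
    induction F using Finset.induction_on with
    | empty => simp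
    | @insert a F ha ih =>
      have h1 : (fun t => if t ∈ insert a F then s t else s' t)
          = Function.update (fun t => if t ∈ F then s t else s' t) a (s a) := by
        funext t
        rcases eq_or_ne t a with rfl | ht
        · simp [Function.update, ha]
        · simp [Function.update, ht, Finset.mem_insert, ht]
      have h2 : (fun t => if t ∈ F then s t else s' t)
          = Function.update (fun t => if t ∈ F then s t else s' t) a (s' a) := by
        funext t
        rcases eq_or_ne t a with rfl | ht
        · simp [Function.update, ha]
        · simp [Function.update, ht]
      rcases lt_or_eq_of_le (h a) with hlt | heq
      · refine le_of_lt ?_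
        calc ψ (fun t => if t ∈ insert a F then s t else s' t)
            = ψ (Function.update (fun t => if t ∈ F then s t else s' t) a (s a)) := by rw [h1]
          _ < ψ (Function.update (fun t => if t ∈ F then s t else s' t) a (s' a)) := hm a _ _ _ hlt
          _ = ψ (fun t => if t ∈ F then s t else s' t) := by rw [← h2]
          _ ≤ ψ s' := ih
      · calc ψ (fun t => if t ∈ insert a F then s t else s' t)
            = ψ (fun t => if t ∈ F then s t else s' t) := by rw [h1, heq, ← h2]
          _ ≤ ψ s' := ih
  have := key Finset.univ
  simpa using this

lemma psi_strict {k : ℕ} {ψ : (Fin k → ℝ) → ℝ} (hm : ArgwiseStrictMono ψ)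
    (s s' : Fin k → ℝ) (h : ∀ t, s t ≤ s' t) (t0 : Fin k) (h0 : s t0 < s' t0) :
    ψ s < ψ s' := by
  have h1 : ψ s < ψ (Function.update s t0 (s' t0)) := by
    have := hm t0 s (s t0) (s' t0) h0
    simpa using this
  refine h1.trans_le (psi_mono hm _ _ ?_)
  intro t
  rcases eq_or_ne t t0 with rfl | ht
  · simp
  · simp [Function.update, ht, h t]

lemma coercive {C : ℕ} (hC : 2 ≤ C) (A : Matrix (Fin C) (Fin C) ℝ)
    (hpsd : A.PosSemidef) (hker : ∀ v : Fin C → ℝ, v ≠ 0 → A.mulVec v ≠ 0) :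
    ∃ c : ℝ, 0 < c ∧ ∀ x : Fin C → ℝ, c * (∑ i, x i ^ 2) ≤ x ⬝ᵥ A *ᵥ x := by
  have hpos : ∀ x : Fin C → ℝ, x ≠ 0 → 0 < x ⬝ᵥ A *ᵥ x := by
    intro x hx
    have h0 : (0:ℝ) ≤ x ⬝ᵥ A *ᵥ x := by simpa using hpsd.dotProduct_mulVec_nonneg x
    rcases h0.lt_or_eq with h | h
    · exact h
    · exfalso
      apply hker x hx
      have := (hpsd.dotProduct_mulVec_zero_iff x).mp (by simpa using h.symm)
      exact this
  set f : EuclideanSpace ℝ (Fin C) → ℝ := fun x => (x : Fin C → ℝ) ⬝ᵥ A *ᵥ (x : Fin C → ℝ) with hf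
  have hcont : Continuous f := by
    simp only [hf, dotProduct, mulVec]
    exact continuous_finset_sum _ fun i _ =>
      ((continuous_apply i).comp (PiLp.continuous_ofLp (p := 2) (β := fun _ => ℝ))).mul
        (continuous_finset_sum _ fun j _ =>
        (continuous_const.mul ((continuous_apply j).comp (PiLp.continuous_ofLp (p := 2) (β := fun _ => ℝ)))))
  have hC0 : (0:ℕ) < C := by omega
  let i0 : Fin C := ⟨0, hC0⟩
  have hsphne : (Metric.sphere (0 : EuclideanSpace ℝ (Fin C)) 1).Nonempty := by
    refine ⟨EuclideanSpace.single i0 (1:ℝ), ?_⟩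
    simp [EuclideanSpace.norm_single]
  obtain ⟨x₀, hx₀mem, hx₀min⟩ :=
    (isCompact_sphere (0 : EuclideanSpace ℝ (Fin C)) 1).exists_isMinOn hsphne hcont.continuousOn
  have hx₀norm : ‖x₀‖ = 1 := by simpa using hx₀mem
  have hx₀ne : (x₀ : Fin C → ℝ) ≠ 0 := by
    intro h
    have : x₀ = 0 := WithLp.ofLp_injective 2 (by simpa using h)
    rw [this] at hx₀norm; simp at hx₀norm
  refine ⟨f x₀, hpos _ hx₀ne, ?_⟩
  intro x
  rcases eq_or_ne x 0 with rfl | hx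
  · simp
  have hsum : 0 < ∑ i, x i ^ 2 := by
    have : ∃ i, x i ≠ 0 := by
      by_contra hall
      push_neg at hall
      exact hx (funext hall)
    obtain ⟨i, hi⟩ := this
    refine Finset.sum_pos' (fun j _ => sq_nonneg _) ⟨i, Finset.mem_univ i, by positivity⟩
  set r : ℝ := Real.sqrt (∑ i, x i ^ 2) with hr
  have hrpos : 0 < r := Real.sqrt_pos.mpr hsum
  have hr2 : r ^ 2 = ∑ i, x i ^ 2 := Real.sq_sqrt hsum.le
  set u : EuclideanSpace ℝ (Fin C) := r⁻¹ • (WithLp.toLp 2 x : EuclideanSpace ℝ (Fin C)) with hu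
  have hui : ∀ i, u i = r⁻¹ * x i := fun i => rfl
  have hunorm : ‖u‖ = 1 := by
    have h1 : ∑ i, ‖u i‖ ^ 2 = 1 := by
      have : ∀ i, ‖u i‖ ^ 2 = r⁻¹ ^ 2 * x i ^ 2 := by
        intro i
        rw [hui i, Real.norm_eq_abs, sq_abs, mul_pow]
      rw [Finset.sum_congr rfl (fun i _ => this i), ← Finset.mul_sum, ← hr2]
      field_simp
    calc ‖u‖ = Real.sqrt (∑ i, ‖u i‖ ^ 2) := EuclideanSpace.norm_eq u
      _ = 1 := by rw [h1, Real.sqrt_one]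
  have humem : u ∈ Metric.sphere (0 : EuclideanSpace ℝ (Fin C)) 1 := by
    simp [hunorm]
  have hmin := hx₀min humem
  have hfu : f u = r⁻¹ * (r⁻¹ * (x ⬝ᵥ A *ᵥ x)) := by
    have : (u : Fin C → ℝ) = r⁻¹ • x := rfl
    simp only [hf, this, Matrix.mulVec_smul, smul_dotProduct, dotProduct_smul,
      smul_eq_mul]
  have h1 : f x₀ ≤ r⁻¹ * (r⁻¹ * (x ⬝ᵥ A *ᵥ x)) := by rw [← hfu]; exact hmin
  have h2 : f x₀ * r ^ 2 ≤ x ⬝ᵥ A *ᵥ x := by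
    have hr2pos : 0 < r ^ 2 := by positivity
    rw [show r⁻¹ * (r⁻¹ * (x ⬝ᵥ A *ᵥ x)) = (x ⬝ᵥ A *ᵥ x) / r ^ 2 by ring] at h1
    rw [le_div_iff₀ hr2pos] at h1
    linarith
  rw [hr2] at h2
  exact h2

/-- if `A*` minimizes `S` over `𝒜*` (ψ argument-wise strictly increasing),
then zero is an eigenvalue of `A*` and `rank(A*) ≤ C − 1`. -/
theorem stmt6 (k C : ℕ) (hk : 1 ≤ k) (hC : 2 ≤ C)
    (lam : Fin C → ℝ) (hlam : ∀ i, lam i ∈ Set.Ioo (0 : ℝ) 1) (hsum : ∑ i, lam i = 1)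
    (ψ : (Fin k → ℝ) → ℝ) (hmono : ArgwiseStrictMono ψ)
    (A : Matrix (Fin C) (Fin C) ℝ) (hA : A ∈ AstarSet C)
    (hmin : ∀ B ∈ AstarSet C, S ψ lam A ≤ S ψ lam B) :
    (∃ v : Fin C → ℝ, v ≠ 0 ∧ A.mulVec v = 0) ∧ A.rank ≤ C - 1 := by
  obtain ⟨hpsd, hdiag⟩ := hA
  have main : ∃ v : Fin C → ℝ, v ≠ 0 ∧ A.mulVec v = 0 := by
    by_contra hcon
    push_neg at hcon
    obtain ⟨c, hc, hcoer⟩ := coercive hC A hpsd hcon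
    have h0C : (0:ℕ) < C := by omega
    have h1C : (1:ℕ) < C := by omega
    set i0 : Fin C := ⟨0, h0C⟩ with hi0
    set i1 : Fin C := ⟨1, h1C⟩ with hi1
    have hne : i0 ≠ i1 := by simp [hi0, hi1, Fin.ext_iff]
    set ε : ℝ := c / 2 with hε
    have hεpos : 0 < ε := by positivity
    set E : Matrix (Fin C) (Fin C) ℝ :=
      Matrix.of fun i j => if (i = i0 ∧ j = i1) ∨ (i = i1 ∧ j = i0) then (1:ℝ) else 0 with hEdef
    set B : Matrix (Fin C) (Fin C) ℝ := A - ε • E with hBdef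
    have hBij : ∀ i j, B i j = A i j - ε * E i j := by
      intro i j; simp [hBdef]
    have hEnn : ∀ i j, 0 ≤ E i j := by
      intro i j; simp only [hEdef, Matrix.of_apply]; split <;> norm_num
    have hEsymm : ∀ i j, E j i = E i j := by
      intro i j; simp only [hEdef, Matrix.of_apply]
      congr 1
      apply propext
      tauto
    have hEdiag : ∀ i, E i i = 0 := by
      intro i
      simp only [hEdef, Matrix.of_apply, ite_eq_right_iff]
      rintro (⟨h1, h2⟩ | ⟨h1, h2⟩)
      · exact absurd (h1.symm.trans h2) hne
      · exact absurd (h2.symm.trans h1) hne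
    have hE01 : E i0 i1 = 1 := by simp [hEdef]
    have hEeq : ∀ i j, E i j = (if i = i0 then (if j = i1 then (1:ℝ) else 0) else 0)
        + (if i = i1 then (if j = i0 then (1:ℝ) else 0) else 0) := by
      intro i j
      simp only [hEdef, Matrix.of_apply]
      by_cases h1 : i = i0 <;> by_cases h2 : j = i1 <;> by_cases h3 : i = i1 <;>
        by_cases h4 : j = i0 <;> simp_all <;> exact absurd (h1 ▸ h3 : i0 = i1) hne
    have hquadE : ∀ x : Fin C → ℝ, x ⬝ᵥ E *ᵥ x = x i0 * x i1 + x i1 * x i0 := by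
      intro x
      simp only [dotProduct, mulVec]
      calc ∑ i, x i * ∑ j, E i j * x j
          = ∑ i, x i * ∑ j, ((if i = i0 then (if j = i1 then (1:ℝ) else 0) else 0)
              + (if i = i1 then (if j = i0 then (1:ℝ) else 0) else 0)) * x j := by
            refine Finset.sum_congr rfl fun i _ => ?_
            congr 1
            exact Finset.sum_congr rfl fun j _ => by rw [hEeq]
        _ = x i0 * x i1 + x i1 * x i0 := by
            simp [add_mul, ite_mul, one_mul, zero_mul, Finset.sum_add_distrib,
              Finset.sum_ite_eq', mul_add, mul_ite, mul_zero, Finset.sum_ite_eq, hne,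
              Finset.sum_ite_eq]
    have hBsymm : B.IsHermitian := by
      have hAsymm := hpsd.1
      refine Matrix.ext fun i j => ?_
      have hA' : A j i = A i j := by
        have := congrFun (congrFun hAsymm i) j
        simpa using this
      simp [Matrix.conjTranspose_apply, hBij, hA', hEsymm]
    have hBpsd : B.PosSemidef := by
      refine Matrix.PosSemidef.of_dotProduct_mulVec_nonneg hBsymm fun x => ?_
      have hq : star x ⬝ᵥ B *ᵥ x = x ⬝ᵥ A *ᵥ x - ε * (x i0 * x i1 + x i1 * x i0) := by
        rw [hBdef]
        rw [Matrix.sub_mulVec, Matrix.smul_mulVec, dotProduct_sub, dotProduct_smul]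
        rw [star_trivial, hquadE x]
        simp [smul_eq_mul]
      rw [hq]
      have h1 := hcoer x
      have h2 : x i0 ^ 2 + x i1 ^ 2 ≤ ∑ i, x i ^ 2 := by
        have := Finset.sum_le_sum_of_subset_of_nonneg
          (Finset.subset_univ ({i0, i1} : Finset (Fin C)))
          (fun i _ _ => sq_nonneg (x i))
        rwa [Finset.sum_pair hne] at this
      have h3 := two_mul_le_add_sq (x i0) (x i1)
      have h4 : (0:ℝ) ≤ ∑ i, x i ^ 2 := Finset.sum_nonneg fun i _ => sq_nonneg _
      nlinarith [sq_nonneg (x i0 + x i1), sq_nonneg (x i0 - x i1)]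
    have hBdiag : ∀ i, B i i = 1 := by
      intro i; rw [hBij, hEdiag, hdiag]; ring
    have hBmem : B ∈ AstarSet C := ⟨hBpsd, hBdiag⟩
    have hBle : ∀ i j, B i j ≤ A i j := by
      intro i j
      rw [hBij]
      nlinarith [hEnn i j, hεpos]
    have hBlt : B i0 i1 < A i0 i1 := by
      rw [hBij, hE01]
      linarith
    have hcoefpos : ∀ i (j : Fin k → Fin C), 0 < lam i * ∏ t, lam (j t) := fun i j =>
      mul_pos (hlam i).1 (Finset.prod_pos fun t _ => (hlam (j t)).1)
    have hSlt : S ψ lam B < S ψ lam A := by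
      unfold S
      have hle : ∀ i (j : Fin k → Fin C),
          (lam i * ∏ t, lam (j t)) * ψ (fun t => B i (j t) - 1)
            ≤ (lam i * ∏ t, lam (j t)) * ψ (fun t => A i (j t) - 1) := by
        intro i j
        exact mul_le_mul_of_nonneg_left
          (psi_mono hmono _ _ fun t => by linarith [hBle i (j t)]) (hcoefpos i j).le
      refine Finset.sum_lt_sum (fun i _ => Finset.sum_le_sum fun j _ => hle i j) ?_
      refine ⟨i0, Finset.mem_univ _, ?_⟩
      refine Finset.sum_lt_sum (fun j _ => hle i0 j) ?_
      refine ⟨fun _ => i1, Finset.mem_univ _, ?_⟩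
      refine mul_lt_mul_of_pos_left ?_ (hcoefpos i0 _)
      exact psi_strict hmono _ _ (fun t => by linarith [hBle i0 i1]) ⟨0, hk⟩ (by linarith)
    exact absurd (hmin B hBmem) (not_le.mpr hSlt)
  obtain ⟨v, hv0, hv⟩ := main
  refine ⟨⟨v, hv0, hv⟩, ?_⟩
  have hkerpos : 0 < Module.finrank ℝ (LinearMap.ker A.mulVecLin) := by
    rw [Module.finrank_pos_iff]
    refine ⟨⟨⟨v, ?_⟩, 0, ?_⟩⟩
    · simpa [Matrix.mulVecLin_apply] using hv
    · simp [Submodule.mk_eq_zero, hv0]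
  have hrn := LinearMap.finrank_range_add_finrank_ker A.mulVecLin
  have hfr : Module.finrank ℝ (Fin C → ℝ) = C := by simp
  rw [hfr] at hrn
  have : A.rank = Module.finrank ℝ (LinearMap.range A.mulVecLin) := rfl
  omega
end

section
/- Let k ≥ 1, C ≥ 2, λ₁,…,λ_C ∈ (0,1) with ∑_{i=1}^C λᵢ = 1, and let ψ : ℝ^k → ℝ be strictly convex and argument-wise strictly increasing. Let A* be the unique minimizer of S over 𝒜*. If i ≠ j are two indices with λᵢ = λⱼ, then A*_{in} = A*_{jn} for every n ∈ {1,…,C} \ {i, j}; equivalently, if M* has unit-norm columns μ₁*,…,μ_C* with (M*)ᵀM* = A*, then (μᵢ*)ᵀμ_n* = (μⱼ*)ᵀμ_n* for all n ∉ {i, j}. -/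
open Matrix

lemma psd_smul' {C : ℕ} {A : Matrix (Fin C) (Fin C) ℝ} (hA : A.PosSemidef)
    {c : ℝ} (hc : 0 ≤ c) : (c • A).PosSemidef := by
  refine ⟨?_, fun x => ?_⟩
  · unfold Matrix.IsHermitian
    rw [conjTranspose_smul, hA.1]
    simp
  · exact (hA.smul hc).2 x

/-- if `A*` is the (unique) minimizer of `S` over `𝒜*` and `i ≠ j` have equal
probabilities `λᵢ = λⱼ`, then `A*_{in} = A*_{jn}` for every `n ∉ {i, j}`. -/
theorem stmt10 (k C : ℕ) (hk : 1 ≤ k) (hC : 2 ≤ C)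
    (lam : Fin C → ℝ) (hlam : ∀ i, lam i ∈ Set.Ioo (0 : ℝ) 1) (hsum : ∑ i, lam i = 1)
    (ψ : (Fin k → ℝ) → ℝ)
    (hconv : StrictConvexOn ℝ Set.univ ψ) (hmono : ArgwiseStrictMono ψ)
    (A : Matrix (Fin C) (Fin C) ℝ) (hA : A ∈ AstarSet C)
    (hmin : ∀ B ∈ AstarSet C, S ψ lam A ≤ S ψ lam B)
    (i j : Fin C) (hij : i ≠ j) (hlameq : lam i = lam j) :
    ∀ n : Fin C, n ≠ i → n ≠ j → A i n = A j n := by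
  intro n hni hnj
  obtain ⟨hApsd, hAdiag⟩ := hA
  set σ : Equiv.Perm (Fin C) := Equiv.swap i j with hσ
  set B : Matrix (Fin C) (Fin C) ℝ := A.submatrix σ σ with hBdef
  have hlamσ : ∀ m, lam (σ m) = lam m := by
    intro m
    rcases eq_or_ne m i with rfl | hmi
    · simp [hσ, Equiv.swap_apply_left, hlameq]
    rcases eq_or_ne m j with rfl | hmj
    · simp [hσ, Equiv.swap_apply_right, hlameq]
    · simp [hσ, Equiv.swap_apply_of_ne_of_ne hmi hmj]
  have hBmem : B ∈ AstarSet C := ⟨hApsd.submatrix σ, fun m => hAdiag (σ m)⟩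
  have hlampos : ∀ m, 0 < lam m := fun m => (hlam m).1
  have hw : ∀ (i' : Fin C) (g : Fin k → Fin C), 0 < lam i' * ∏ t, lam (g t) :=
    fun i' g => mul_pos (hlampos i') (Finset.prod_pos fun t _ => hlampos (g t))
  -- S(B) = S(A)
  have hSB : S ψ lam A = S ψ lam B := by
    unfold S
    refine Fintype.sum_equiv σ _ _ (fun i' => ?_)
    refine Fintype.sum_equiv (Equiv.piCongrRight fun _ : Fin k => σ) _ _ (fun g => ?_)
    simp only [Equiv.piCongrRight_apply, Pi.map_apply, hlamσ, hBdef, submatrix_apply,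
      hσ, Equiv.swap_apply_self]
    simp only [← hσ, hlamσ]
  -- midpoint
  set M : Matrix (Fin C) (Fin C) ℝ := (2⁻¹ : ℝ) • A + (2⁻¹ : ℝ) • B with hMdef
  have hMmem : M ∈ AstarSet C := by
    refine ⟨(psd_smul' hApsd (by norm_num)).add (psd_smul' hBmem.1 (by norm_num)), fun m => ?_⟩
    have h1 : A m m = 1 := hAdiag m
    have h2 : B m m = 1 := hBmem.2 m
    simp [hMdef, h1, h2]
    norm_num
  -- termwise pieces
  set xA : Fin C → (Fin k → Fin C) → (Fin k → ℝ) :=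
    fun i' g => (fun t => A i' (g t) - 1) with hxA
  set xB : Fin C → (Fin k → Fin C) → (Fin k → ℝ) :=
    fun i' g => (fun t => B i' (g t) - 1) with hxB
  have hmid : ∀ (i' : Fin C) (g : Fin k → Fin C),
      (fun t => M i' (g t) - 1) = (2⁻¹ : ℝ) • xA i' g + (2⁻¹ : ℝ) • xB i' g := by
    intro i' g
    funext t
    simp [hMdef, hxA, hxB, Matrix.add_apply, Matrix.smul_apply, smul_eq_mul]
    ring
  have hterm : ∀ (i' : Fin C) (g : Fin k → Fin C),
      ψ (fun t => M i' (g t) - 1) ≤ 2⁻¹ * ψ (xA i' g) + 2⁻¹ * ψ (xB i' g) := by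
    intro i' g
    have := hconv.convexOn.2 (Set.mem_univ (xA i' g)) (Set.mem_univ (xB i' g))
      (by norm_num : (0:ℝ) ≤ 2⁻¹) (by norm_num : (0:ℝ) ≤ 2⁻¹) (by norm_num)
    rw [hmid i' g]
    simpa [smul_eq_mul] using this
  -- the nonnegative defect
  set d : Fin C × (Fin k → Fin C) → ℝ :=
    fun p => (lam p.1 * ∏ t, lam (p.2 t)) *
      (2⁻¹ * ψ (xA p.1 p.2) + 2⁻¹ * ψ (xB p.1 p.2) - ψ (fun t => M p.1 (p.2 t) - 1)) with hd
  have hdnonneg : ∀ p : Fin C × (Fin k → Fin C), 0 ≤ d p := by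
    intro p
    exact mul_nonneg (hw p.1 p.2).le (by linarith [hterm p.1 p.2])
  have hsumd : ∑ p : Fin C × (Fin k → Fin C), d p
      = 2⁻¹ * S ψ lam A + 2⁻¹ * S ψ lam B - S ψ lam M := by
    rw [Fintype.sum_prod_type]
    unfold S
    simp only [Finset.mul_sum, ← Finset.sum_add_distrib, ← Finset.sum_sub_distrib]
    refine Finset.sum_congr rfl fun i' _ => ?_
    refine Finset.sum_congr rfl fun g _ => ?_
    simp only [hd, hxA, hxB]
    ring
  have hsumle : ∑ p : Fin C × (Fin k → Fin C), d p ≤ 0 := by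
    rw [hsumd, ← hSB]
    have := hmin M hMmem
    linarith
  have hdzero : ∀ p : Fin C × (Fin k → Fin C), d p = 0 := by
    have h0 : ∑ p : Fin C × (Fin k → Fin C), d p = 0 :=
      le_antisymm hsumle (Finset.sum_nonneg fun p _ => hdnonneg p)
    intro p
    exact (Finset.sum_eq_zero_iff_of_nonneg (fun p _ => hdnonneg p)).mp h0 p (Finset.mem_univ p)
  -- equality of arguments
  have hargeq : ∀ (i' : Fin C) (g : Fin k → Fin C), xA i' g = xB i' g := by
    intro i' g
    by_contra hne
    have hlt := hconv.2 (Set.mem_univ (xA i' g)) (Set.mem_univ (xB i' g)) hne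
      (by norm_num : (0:ℝ) < 2⁻¹) (by norm_num : (0:ℝ) < 2⁻¹) (by norm_num)
    rw [← hmid i' g] at hlt
    have hz := hdzero (i', g)
    simp only [hd] at hz
    have := (hw i' g).ne'
    have h2 : 2⁻¹ * ψ (xA i' g) + 2⁻¹ * ψ (xB i' g) - ψ (fun t => M i' (g t) - 1) = 0 := by
      rcases mul_eq_zero.mp hz with h | h
      · exact absurd h this
      · exact h
    simp only [smul_eq_mul] at hlt
    linarith
  -- conclude
  have key := congrFun (hargeq i (fun _ => n)) ⟨0, hk⟩
  simp only [hxA, hxB, hBdef, submatrix_apply] at key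
  have hσi : σ i = j := Equiv.swap_apply_left i j
  have hσn : σ n = n := Equiv.swap_apply_of_ne_of_ne hni hnj
  rw [hσi, hσn] at key
  linarith
end

section
/- Let k ≥ 1, C ≥ 3, and let the class probabilities satisfy 1 > λ₁ > λ₂ = λ₃ = … = λ_C = (1−λ₁)/(C−1) > 0. Let ψ : ℝ^k → ℝ be strictly convex and argument-wise strictly increasing, and let A* be the unique minimizer of S over 𝒜*. Then there exists a ∈ [−1, 1] such that A*_{ii} = 1 for all i, A*_{1j} = A*_{j1} = a for all j ≠ 1, and A*_{ij} = ((C−1)a² − 1)/(C−2) for all distinct i, j ∈ {2,…,C}. -/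
open Matrix

/-! ### Auxiliary lemmas -/

lemma argmono_le {k : ℕ} {ψ : (Fin k → ℝ) → ℝ} (h : ArgwiseStrictMono ψ)
    {u v : Fin k → ℝ} (huv : ∀ t, u t ≤ v t) : ψ u ≤ ψ v := by
  classical
  have key : ∀ s : Finset (Fin k), ψ (fun t => if t ∈ s then u t else v t) ≤ ψ v := by
    intro s
    refine Finset.induction_on s ?_ ?_
    · simp
    · intro a s ha ih
      have e1 : (fun t => if t ∈ insert a s then u t else v t)
          = Function.update (fun t => if t ∈ s then u t else v t) a (u a) := by
        funext t
        by_cases hta : t = a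
        · subst hta; simp [ha]
        · simp [Function.update, hta]
      have e2 : (fun t => if t ∈ s then u t else v t)
          = Function.update (fun t => if t ∈ s then u t else v t) a (v a) := by
        funext t
        by_cases hta : t = a
        · subst hta; simp [ha]
        · simp [Function.update, hta]
      have step : ψ (Function.update (fun t => if t ∈ s then u t else v t) a (u a))
          ≤ ψ (Function.update (fun t => if t ∈ s then u t else v t) a (v a)) := by
        rcases lt_or_eq_of_le (huv a) with hlt | heq
        · exact (h a _ _ _ hlt).le
        · rw [heq]
      rw [e1]
      calc ψ (Function.update (fun t => if t ∈ s then u t else v t) a (u a))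
          ≤ ψ (Function.update (fun t => if t ∈ s then u t else v t) a (v a)) := step
        _ ≤ ψ v := by rw [← e2]; exact ih
  have := key Finset.univ
  simpa using this

lemma argmono_lt {k : ℕ} {ψ : (Fin k → ℝ) → ℝ} (h : ArgwiseStrictMono ψ)
    {u v : Fin k → ℝ} (huv : ∀ t, u t ≤ v t) (t₀ : Fin k) (hst : u t₀ < v t₀) :
    ψ u < ψ v := by
  have h1 : ψ u < ψ (Function.update u t₀ (v t₀)) := by
    have := h t₀ u (u t₀) (v t₀) hst
    simpa [Function.update_eq_self] using this
  refine h1.trans_le (argmono_le h ?_)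
  intro t
  by_cases ht : t = t₀
  · subst ht; simp
  · simp [Function.update, ht, huv t]

lemma S_perm {k C : ℕ} (ψ : (Fin k → ℝ) → ℝ) (lam : Fin C → ℝ)
    (A : Matrix (Fin C) (Fin C) ℝ) (σ : Equiv.Perm (Fin C)) (hσ : ∀ i, lam (σ i) = lam i) :
    S ψ lam (Matrix.of fun i j => A (σ i) (σ j)) = S ψ lam A := by
  unfold S
  rw [← Equiv.sum_comp σ (fun i => ∑ j : Fin k → Fin C,
    (lam i * ∏ t, lam (j t)) * ψ (fun t => A i (j t) - 1))]
  refine Finset.sum_congr rfl fun i _ => ?_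
  rw [← Equiv.sum_comp (Equiv.piCongrRight fun _ : Fin k => σ)
    (fun j : Fin k → Fin C => (lam (σ i) * ∏ t, lam (j t)) * ψ (fun t => A (σ i) (j t) - 1))]
  refine Finset.sum_congr rfl fun j _ => ?_
  simp [Equiv.piCongrRight, hσ]

lemma quad_form {C : ℕ} (i₀ : Fin C) (M : Matrix (Fin C) (Fin C) ℝ) (a β : ℝ)
    (hd : ∀ i, M i i = 1)
    (hrow : ∀ j, j ≠ i₀ → M i₀ j = a) (hcol : ∀ j, j ≠ i₀ → M j i₀ = a)
    (hoff : ∀ i j, i ≠ i₀ → j ≠ i₀ → i ≠ j → M i j = β)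
    (x : Fin C → ℝ) :
    x ⬝ᵥ (M *ᵥ x) = (x i₀)^2 + 2*a*(x i₀)*(∑ j ∈ Finset.univ.erase i₀, x j)
      + β*(∑ j ∈ Finset.univ.erase i₀, x j)^2
      + (1-β)*(∑ j ∈ Finset.univ.erase i₀, (x j)^2) := by
  classical
  set s := ∑ j ∈ Finset.univ.erase i₀, x j with hs
  set q := ∑ j ∈ Finset.univ.erase i₀, (x j)^2 with hq
  have hdot : x ⬝ᵥ (M *ᵥ x) = ∑ i : Fin C, x i * ∑ j : Fin C, M i j * x j := by
    simp [dotProduct, mulVec]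
  have e0 : ∑ j : Fin C, M i₀ j * x j = x i₀ + a * s := by
    rw [← Finset.add_sum_erase _ _ (Finset.mem_univ i₀), hd i₀]
    rw [Finset.sum_congr rfl fun j hj => by
      rw [hrow j (Finset.ne_of_mem_erase hj)]]
    rw [← Finset.mul_sum]; ring
  have e1 : ∀ i, i ≠ i₀ → ∑ j : Fin C, M i j * x j = a * x i₀ + x i + β * (s - x i) := by
    intro i hi
    rw [← Finset.add_sum_erase _ _ (Finset.mem_univ i₀), hcol i hi]
    have hi' : i ∈ Finset.univ.erase i₀ := Finset.mem_erase.2 ⟨hi, Finset.mem_univ i⟩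
    rw [← Finset.add_sum_erase _ _ hi', hd i]
    rw [Finset.sum_congr rfl fun j hj => by
      rw [hoff i j hi (Finset.ne_of_mem_erase (Finset.mem_of_mem_erase hj))
        (Ne.symm (Finset.ne_of_mem_erase hj))]]
    rw [← Finset.mul_sum, Finset.sum_erase_eq_sub hi', ← hs]
    ring
  rw [hdot, ← Finset.add_sum_erase _ _ (Finset.mem_univ i₀), e0]
  rw [Finset.sum_congr rfl fun i hi => by rw [e1 i (Finset.ne_of_mem_erase hi)]]
  have expand : ∀ i : Fin C, x i * (a * x i₀ + x i + β * (s - x i))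
      = (a * x i₀ + β * s) * x i + (1 - β) * (x i)^2 := by intro i; ring
  rw [Finset.sum_congr rfl fun i _ => expand i, Finset.sum_add_distrib,
    ← Finset.mul_sum, ← Finset.mul_sum, ← hs, ← hq]
  ring

lemma posSemidef_half_add {C : ℕ} {A B : Matrix (Fin C) (Fin C) ℝ}
    (hA : A.PosSemidef) (hB : B.PosSemidef) : ((1/2 : ℝ) • (A + B)).PosSemidef := by
  refine Matrix.PosSemidef.of_dotProduct_mulVec_nonneg ?_ ?_
  · have h := hA.1.add hB.1
    rw [Matrix.IsHermitian, conjTranspose_smul, h]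
    norm_num
  · intro x
    have h1 := hA.dotProduct_mulVec_nonneg x
    have h2 := hB.dotProduct_mulVec_nonneg x
    have : x ⬝ᵥ (((1/2 : ℝ) • (A + B)) *ᵥ x)
        = (1/2 : ℝ) * (x ⬝ᵥ (A *ᵥ x) + x ⬝ᵥ (B *ᵥ x)) := by
      rw [smul_mulVec, add_mulVec, dotProduct_smul, dotProduct_add]
      simp [smul_eq_mul]
    rw [star_trivial, this]
    simp only [star_trivial] at h1 h2
    positivity

lemma S_midpoint_lt {k C : ℕ} (hk : 1 ≤ k) (ψ : (Fin k → ℝ) → ℝ) (lam : Fin C → ℝ)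
    (hlam : ∀ i, 0 < lam i) (hconv : StrictConvexOn ℝ Set.univ ψ)
    {A B : Matrix (Fin C) (Fin C) ℝ} (hAB : A ≠ B) :
    S ψ lam ((1/2 : ℝ) • (A + B)) < (S ψ lam A + S ψ lam B) / 2 := by
  classical
  have hw : ∀ (i : Fin C) (j : Fin k → Fin C), 0 < lam i * ∏ t, lam (j t) :=
    fun i j => mul_pos (hlam i) (Finset.prod_pos fun t _ => hlam (j t))
  have hmid : ∀ (i : Fin C) (j : Fin k → Fin C),
      (fun t => ((1/2 : ℝ) • (A + B)) i (j t) - 1)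
        = (1/2 : ℝ) • (fun t => A i (j t) - 1) + (1/2 : ℝ) • (fun t => B i (j t) - 1) := by
    intro i j; funext t
    simp only [Matrix.smul_apply, Matrix.add_apply, Pi.add_apply, Pi.smul_apply, smul_eq_mul]
    ring
  have hterm_le : ∀ (i : Fin C) (j : Fin k → Fin C),
      ψ (fun t => ((1/2:ℝ) • (A + B)) i (j t) - 1)
        ≤ (ψ (fun t => A i (j t) - 1) + ψ (fun t => B i (j t) - 1)) / 2 := by
    intro i j
    rw [hmid i j]
    have h := hconv.convexOn.2 (Set.mem_univ (fun t => A i (j t) - 1))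
      (Set.mem_univ (fun t => B i (j t) - 1)) (by norm_num : (0:ℝ) ≤ 1/2)
      (by norm_num : (0:ℝ) ≤ 1/2) (by norm_num : (1:ℝ)/2 + 1/2 = 1)
    calc ψ _ ≤ (1/2:ℝ) * ψ (fun t => A i (j t) - 1)
          + (1/2:ℝ) * ψ (fun t => B i (j t) - 1) := by
          simpa [smul_eq_mul] using h
      _ = _ := by ring
  obtain ⟨i₁, j₁, hne⟩ : ∃ i j, A i j ≠ B i j := by
    by_contra hcon
    push_neg at hcon
    exact hAB (by ext i j; exact hcon i j)
  set jc : Fin k → Fin C := fun _ => j₁ with hjc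
  have hargsne : (fun t => A i₁ (jc t) - 1) ≠ (fun t => B i₁ (jc t) - 1) := by
    intro hcon
    have := congrFun hcon ⟨0, hk⟩
    simp [hjc] at this
    exact hne this
  have hterm_lt : ψ (fun t => ((1/2:ℝ) • (A + B)) i₁ (jc t) - 1)
      < (ψ (fun t => A i₁ (jc t) - 1) + ψ (fun t => B i₁ (jc t) - 1)) / 2 := by
    rw [hmid i₁ jc]
    have h := hconv.2 (Set.mem_univ (fun t => A i₁ (jc t) - 1))
      (Set.mem_univ (fun t => B i₁ (jc t) - 1)) hargsne
      (by norm_num : (0:ℝ) < 1/2) (by norm_num : (0:ℝ) < 1/2)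
      (by norm_num : (1:ℝ)/2 + 1/2 = 1)
    calc ψ _ < (1/2:ℝ) * ψ (fun t => A i₁ (jc t) - 1)
          + (1/2:ℝ) * ψ (fun t => B i₁ (jc t) - 1) := by
          simpa [smul_eq_mul] using h
      _ = _ := by ring
  have main : S ψ lam ((1/2 : ℝ) • (A + B))
      < ∑ i : Fin C, ∑ j : Fin k → Fin C,
        ((lam i * ∏ t, lam (j t)) * ψ (fun t => A i (j t) - 1)
          + (lam i * ∏ t, lam (j t)) * ψ (fun t => B i (j t) - 1)) / 2 := by
    unfold S
    refine Finset.sum_lt_sum (fun i _ => Finset.sum_le_sum fun j _ => ?_)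
      ⟨i₁, Finset.mem_univ i₁, ?_⟩
    · have h := mul_le_mul_of_nonneg_left (hterm_le i j) (hw i j).le
      calc (lam i * ∏ t, lam (j t)) * ψ (fun t => ((1/2:ℝ) • (A + B)) i (j t) - 1)
          ≤ (lam i * ∏ t, lam (j t)) *
            ((ψ (fun t => A i (j t) - 1) + ψ (fun t => B i (j t) - 1)) / 2) := h
        _ = _ := by ring
    · refine Finset.sum_lt_sum (fun j _ => ?_) ⟨jc, Finset.mem_univ jc, ?_⟩
      · have h := mul_le_mul_of_nonneg_left (hterm_le i₁ j) (hw i₁ j).le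
        calc (lam i₁ * ∏ t, lam (j t)) * ψ (fun t => ((1/2:ℝ) • (A + B)) i₁ (j t) - 1)
            ≤ (lam i₁ * ∏ t, lam (j t)) *
              ((ψ (fun t => A i₁ (j t) - 1) + ψ (fun t => B i₁ (j t) - 1)) / 2) := h
          _ = _ := by ring
      · have h := mul_lt_mul_of_pos_left hterm_lt (hw i₁ jc)
        calc (lam i₁ * ∏ t, lam (jc t)) * ψ (fun t => ((1/2:ℝ) • (A + B)) i₁ (jc t) - 1)
            < (lam i₁ * ∏ t, lam (jc t)) *
              ((ψ (fun t => A i₁ (jc t) - 1) + ψ (fun t => B i₁ (jc t) - 1)) / 2) := h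
          _ = _ := by ring
  refine main.trans_le (le_of_eq ?_)
  unfold S
  symm
  rw [← Finset.sum_add_distrib, Finset.sum_div]
  refine Finset.sum_congr rfl fun i _ => ?_
  rw [← Finset.sum_add_distrib, Finset.sum_div]

lemma S_strict_mono_matrix {k C : ℕ} (hk : 1 ≤ k) (ψ : (Fin k → ℝ) → ℝ) (lam : Fin C → ℝ)
    (hlam : ∀ i, 0 < lam i) (hmono : ArgwiseStrictMono ψ)
    {A B : Matrix (Fin C) (Fin C) ℝ} (hle : ∀ i j, B i j ≤ A i j)
    (i₁ j₁ : Fin C) (hlt : B i₁ j₁ < A i₁ j₁) : S ψ lam B < S ψ lam A := by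
  classical
  have hw : ∀ (i : Fin C) (j : Fin k → Fin C), 0 < lam i * ∏ t, lam (j t) :=
    fun i j => mul_pos (hlam i) (Finset.prod_pos fun t _ => hlam (j t))
  set jc : Fin k → Fin C := fun _ => j₁ with hjc
  have hterm_le : ∀ (i : Fin C) (j : Fin k → Fin C),
      ψ (fun t => B i (j t) - 1) ≤ ψ (fun t => A i (j t) - 1) :=
    fun i j => argmono_le hmono (fun t => by have := hle i (j t); linarith)
  unfold S
  refine Finset.sum_lt_sum (fun i _ => Finset.sum_le_sum fun j _ =>
      mul_le_mul_of_nonneg_left (hterm_le i j) (hw i j).le)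
    ⟨i₁, Finset.mem_univ i₁, ?_⟩
  refine Finset.sum_lt_sum (fun j _ =>
      mul_le_mul_of_nonneg_left (hterm_le i₁ j) (hw i₁ j).le)
    ⟨jc, Finset.mem_univ jc, ?_⟩
  refine mul_lt_mul_of_pos_left ?_ (hw i₁ jc)
  refine argmono_lt hmono (fun t => by have := hle i₁ (jc t); simp only [hjc]; linarith)
    ⟨0, hk⟩ ?_
  simp only [hjc]
  linarith

set_option maxHeartbeats 1600000 in
/-- with one majority class (index `i₀`, the first class) and `C−1`
equiprobable minority classes, the minimizer `A*` of `S` over `𝒜*` has the one-parameter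
form: unit diagonal, first-row/column off-diagonal entries `a ∈ [−1,1]`, and remaining
off-diagonal entries `((C−1)a² − 1)/(C−2)`. -/
theorem stmt13 (k C : ℕ) (hk : 1 ≤ k) (hC : 3 ≤ C)
    (i₀ : Fin C) (hi₀ : (i₀ : ℕ) = 0)
    (lam : Fin C → ℝ)
    (hlt1 : lam i₀ < 1)
    (hminor : ∀ i : Fin C, i ≠ i₀ → lam i = (1 - lam i₀) / ((C : ℝ) - 1))
    (hmaj : (1 - lam i₀) / ((C : ℝ) - 1) < lam i₀)
    (hpos : 0 < (1 - lam i₀) / ((C : ℝ) - 1))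
    (ψ : (Fin k → ℝ) → ℝ)
    (hconv : StrictConvexOn ℝ Set.univ ψ) (hmono : ArgwiseStrictMono ψ)
    (A : Matrix (Fin C) (Fin C) ℝ) (hA : A ∈ AstarSet C)
    (hmin : ∀ B ∈ AstarSet C, S ψ lam A ≤ S ψ lam B) :
    ∃ a ∈ Set.Icc (-1 : ℝ) 1,
      (∀ i, A i i = 1) ∧
      (∀ j : Fin C, j ≠ i₀ → A i₀ j = a ∧ A j i₀ = a) ∧
      (∀ i j : Fin C, i ≠ i₀ → j ≠ i₀ → i ≠ j →
        A i j = (((C : ℝ) - 1) * a ^ 2 - 1) / ((C : ℝ) - 2)) := by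
  classical
  obtain ⟨hApsd, hAdiag⟩ := hA
  have hlam : ∀ i, 0 < lam i := by
    intro i
    by_cases hi : i = i₀
    · subst hi; exact hpos.trans hmaj
    · rw [hminor i hi]; exact hpos
  have hsymm : ∀ i j, A j i = A i j := by
    intro i j
    have := hApsd.1.apply i j
    simpa using this
  -- invariance under permutations fixing i₀
  have hinv : ∀ σ : Equiv.Perm (Fin C), σ i₀ = i₀ → ∀ i j, A (σ i) (σ j) = A i j := by
    intro σ hσ0 i j
    have hσlam : ∀ i, lam (σ i) = lam i := by
      intro i
      by_cases hi : i = i₀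
      · subst hi; rw [hσ0]
      · have h1 : σ i ≠ i₀ := fun hcon => hi (σ.injective (by rw [hσ0, hcon]))
        rw [hminor _ h1, hminor _ hi]
    set B : Matrix (Fin C) (Fin C) ℝ := Matrix.of fun i j => A (σ i) (σ j) with hB
    have hBpsd : B.PosSemidef := hApsd.submatrix σ
    have hBin : B ∈ AstarSet C := ⟨hBpsd, fun i => hAdiag (σ i)⟩
    have hSB : S ψ lam B = S ψ lam A := S_perm ψ lam A σ hσlam
    by_contra hne'
    have hABne : A ≠ B := by
      intro hcon
      exact hne' (by rw [show A (σ i) (σ j) = B i j from rfl, ← hcon])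
    have hMin : (1/2 : ℝ) • (A + B) ∈ AstarSet C := by
      refine ⟨posSemidef_half_add hApsd hBpsd, fun i => ?_⟩
      have hBii : B i i = 1 := hBin.2 i
      simp only [Matrix.smul_apply, Matrix.add_apply, hAdiag i, hBii, smul_eq_mul]
      norm_num
    have h1 := hmin _ hMin
    have h2 := S_midpoint_lt hk ψ lam hlam hconv hABne
    rw [hSB] at h2
    linarith
  -- canonical minority indices
  have hC1 : (1:ℕ) < C := by omega
  have hC2 : (2:ℕ) < C := by omega
  set u : Fin C := ⟨1, hC1⟩ with hu
  set v : Fin C := ⟨2, hC2⟩ with hv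
  have hu0 : u ≠ i₀ := by
    intro h; apply_fun Fin.val at h; rw [hi₀] at h; simp [hu] at h
  have hv0 : v ≠ i₀ := by
    intro h; apply_fun Fin.val at h; rw [hi₀] at h; simp [hv] at h
  have huv : u ≠ v := by
    intro h; apply_fun Fin.val at h; simp [hu, hv] at h
  set a : ℝ := A i₀ u with ha
  set b : ℝ := A u v with hb
  -- row constancy
  have hrow : ∀ j, j ≠ i₀ → A i₀ j = a := by
    intro j hj
    by_cases hju : j = u
    · subst hju; rfl
    · set σ := Equiv.swap u j with hσ
      have hσ0 : σ i₀ = i₀ :=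
        Equiv.swap_apply_of_ne_of_ne (Ne.symm hu0) (Ne.symm hj)
      have h := hinv σ hσ0 i₀ u
      rw [hσ0, hσ] at h
      rw [Equiv.swap_apply_left] at h
      rw [ha]; exact h
  have hcol : ∀ j, j ≠ i₀ → A j i₀ = a := fun j hj => by rw [hsymm, hrow j hj]
  -- off-diagonal minority constancy
  have hoff : ∀ i j, i ≠ i₀ → j ≠ i₀ → i ≠ j → A i j = b := by
    intro i j hi hj hij
    have he1i₀ : Equiv.swap u i i₀ = i₀ :=
      Equiv.swap_apply_of_ne_of_ne (Ne.symm hu0) (Ne.symm hi)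
    have hwne0 : Equiv.swap u i v ≠ i₀ := by
      intro hcon
      exact hv0 ((Equiv.swap u i).injective (hcon.trans he1i₀.symm))
    have hwnei : Equiv.swap u i v ≠ i := by
      intro hcon
      have h2 : Equiv.swap u i v = Equiv.swap u i u := by
        rw [hcon, Equiv.swap_apply_left]
      exact huv ((Equiv.swap u i).injective h2).symm
    have hσ0 : ((Equiv.swap u i).trans (Equiv.swap (Equiv.swap u i v) j)) i₀ = i₀ := by
      rw [Equiv.trans_apply, he1i₀]
      exact Equiv.swap_apply_of_ne_of_ne (Ne.symm hwne0) (Ne.symm hj)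
    have hσu : ((Equiv.swap u i).trans (Equiv.swap (Equiv.swap u i v) j)) u = i := by
      rw [Equiv.trans_apply, Equiv.swap_apply_left]
      exact Equiv.swap_apply_of_ne_of_ne (Ne.symm hwnei) hij
    have hσv : ((Equiv.swap u i).trans (Equiv.swap (Equiv.swap u i v) j)) v = j := by
      rw [Equiv.trans_apply, Equiv.swap_apply_left]
    have h := hinv ((Equiv.swap u i).trans (Equiv.swap (Equiv.swap u i v) j)) hσ0 u v
    rw [hσu, hσv] at h
    rw [hb]; exact h
  -- cast facts
  have hC3 : (3:ℝ) ≤ (C:ℝ) := by exact_mod_cast hC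
  have hCm1 : (0:ℝ) < (C:ℝ) - 1 := by linarith
  have hCm2 : (0:ℝ) < (C:ℝ) - 2 := by linarith
  have hcardn : (Finset.univ.erase i₀).card = C - 1 := by
    rw [Finset.card_erase_of_mem (Finset.mem_univ i₀)]
    simp
  have hcard : ((Finset.univ.erase i₀).card : ℝ) = (C:ℝ) - 1 := by
    rw [hcardn]
    have : (1:ℕ) ≤ C := by omega
    push_cast [this]
    ring
  -- quadratic form of A
  have hformA : ∀ x : Fin C → ℝ, 0 ≤ (x i₀)^2
      + 2*a*(x i₀)*(∑ j ∈ Finset.univ.erase i₀, x j)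
      + b*(∑ j ∈ Finset.univ.erase i₀, x j)^2
      + (1-b)*(∑ j ∈ Finset.univ.erase i₀, (x j)^2) := by
    intro x
    have h := hApsd.dotProduct_mulVec_nonneg x
    rw [star_trivial, quad_form i₀ A a b hAdiag hrow hcol hoff x] at h
    exact h
  -- bounds on a
  have habs : ∀ c : ℝ, 0 ≤ 1 + 2*a*c + c^2 := by
    intro c
    set x : Fin C → ℝ := fun m => if m = i₀ then 1 else if m = u then c else 0 with hx
    have hx0 : x i₀ = 1 := by simp [hx]
    have hs : ∑ j ∈ Finset.univ.erase i₀, x j = c := by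
      rw [Finset.sum_congr rfl (fun j hj => show x j = if j = u then c else 0 by
        simp [hx, Finset.ne_of_mem_erase hj])]
      rw [Finset.sum_ite_eq' _ u (fun _ => c)]
      simp [Finset.mem_erase, hu0]
    have hq : ∑ j ∈ Finset.univ.erase i₀, (x j)^2 = c^2 := by
      rw [Finset.sum_congr rfl (fun j hj => show (x j)^2 = if j = u then c^2 else 0 by
        simp only [hx, Finset.ne_of_mem_erase hj, if_false]
        split_ifs <;> simp)]
      rw [Finset.sum_ite_eq' _ u (fun _ => c^2)]
      simp [Finset.mem_erase, hu0]
    have h := hformA x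
    rw [hx0, hs, hq] at h
    nlinarith [h]
  have ha_ub : a ≤ 1 := by nlinarith [habs (-1)]
  have ha_lb : -1 ≤ a := by nlinarith [habs 1]
  -- lower bound on b
  set β : ℝ := (((C:ℝ) - 1) * a^2 - 1) / ((C:ℝ) - 2) with hβ
  have hβmul : β * ((C:ℝ) - 2) = ((C:ℝ) - 1) * a^2 - 1 :=
    div_mul_cancel₀ _ (ne_of_gt hCm2)
  have hb_ge : β ≤ b := by
    set x : Fin C → ℝ := fun m => if m = i₀ then -(((C:ℝ)-1)*a) else 1 with hx
    have hx0 : x i₀ = -(((C:ℝ)-1)*a) := by simp [hx]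
    have hs : ∑ j ∈ Finset.univ.erase i₀, x j = (C:ℝ) - 1 := by
      rw [Finset.sum_congr rfl (fun j hj => show x j = 1 by
        simp [hx, Finset.ne_of_mem_erase hj])]
      rw [Finset.sum_const, nsmul_eq_mul, hcard, mul_one]
    have hq : ∑ j ∈ Finset.univ.erase i₀, (x j)^2 = (C:ℝ) - 1 := by
      rw [Finset.sum_congr rfl (fun j hj => show (x j)^2 = 1 by
        simp [hx, Finset.ne_of_mem_erase hj])]
      rw [Finset.sum_const, nsmul_eq_mul, hcard, mul_one]
    have h := hformA x
    rw [hx0, hs, hq] at h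
    rw [hβ, div_le_iff₀ hCm2]
    nlinarith [h, hCm1]
  -- upper bound on b via minimality
  have hb_le : b ≤ β := by
    by_contra hcon
    push_neg at hcon
    -- candidate matrix
    set Bm : Matrix (Fin C) (Fin C) ℝ :=
      Matrix.of fun i j => if i = j then 1 else if i = i₀ ∨ j = i₀ then a else β with hBm
    have hBd : ∀ i, Bm i i = 1 := fun i => by simp [hBm]
    have hBrow : ∀ j, j ≠ i₀ → Bm i₀ j = a := by
      intro j hj
      simp [hBm, Ne.symm hj]
    have hBcol : ∀ j, j ≠ i₀ → Bm j i₀ = a := by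
      intro j hj
      simp [hBm, hj]
    have hBoff : ∀ i j, i ≠ i₀ → j ≠ i₀ → i ≠ j → Bm i j = β := by
      intro i j hi hj hij
      simp [hBm, hi, hj, hij]
    have hBsym : ∀ i j, Bm j i = Bm i j := by
      intro i j
      rcases eq_or_ne i j with hij | hij
      · subst hij; rfl
      · rcases eq_or_ne i i₀ with h2 | h2
        · subst h2
          simp [hBm, hij, hij.symm]
        · rcases eq_or_ne j i₀ with h3 | h3
          · subst h3
            simp [hBm, hij, hij.symm, h2]
          · simp [hBm, hij, hij.symm, h2, h3]
    have hBpsd : Bm.PosSemidef := by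
      refine Matrix.PosSemidef.of_dotProduct_mulVec_nonneg ?_ ?_
      · rw [Matrix.IsHermitian]
        ext i j
        simp only [conjTranspose_apply, star_trivial]
        exact hBsym i j
      · intro x
        rw [star_trivial, quad_form i₀ Bm a β hBd hBrow hBcol hBoff x]
        set s := ∑ j ∈ Finset.univ.erase i₀, x j with hsdef
        set q := ∑ j ∈ Finset.univ.erase i₀, (x j)^2 with hqdef
        have hCS : s^2 ≤ ((C:ℝ) - 1) * q := by
          have h := sq_sum_le_card_mul_sum_sq
            (s := Finset.univ.erase i₀) (f := x)
          rw [hcard] at h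
          exact h
        have ha2 : 0 ≤ 1 - a^2 := by nlinarith
        have key : ((C:ℝ) - 2) * ((x i₀)^2 + 2*a*(x i₀)*s + β*s^2 + (1-β)*q)
            = ((C:ℝ) - 2) * (x i₀ + a*s)^2 + (1 - a^2) * (((C:ℝ) - 1)*q - s^2) := by
          linear_combination (s^2 - q) * hβmul
        nlinarith [mul_nonneg ha2 (by linarith : (0:ℝ) ≤ ((C:ℝ) - 1)*q - s^2),
          mul_nonneg hCm2.le (sq_nonneg (x i₀ + a*s)), key, hCm2]
    have hBin : Bm ∈ AstarSet C := ⟨hBpsd, hBd⟩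
    have hBleA : ∀ i j, Bm i j ≤ A i j := by
      intro i j
      by_cases hij : i = j
      · subst hij; rw [hBd, hAdiag]
      · by_cases hi : i = i₀
        · have hj : j ≠ i₀ := fun h => hij (hi.trans h.symm)
          rw [hi, hBrow j hj, hrow j hj]
        · by_cases hj : j = i₀
          · subst hj
            rw [hBcol i hi, hcol i hi]
          · rw [hBoff i j hi hj hij, hoff i j hi hj hij]
            linarith
    have hBlt : Bm u v < A u v := by
      rw [hBoff u v hu0 hv0 huv, hoff u v hu0 hv0 huv]
      linarith
    have := S_strict_mono_matrix hk ψ lam hlam hmono hBleA u v hBlt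
    have := hmin Bm hBin
    linarith
  have hbval : b = β := le_antisymm hb_le hb_ge
  exact ⟨a, ⟨ha_lb, ha_ub⟩, hAdiag,
    fun j hj => ⟨hrow j hj, hcol j hj⟩,
    fun i j hi hj hij => by rw [hoff i j hi hj hij, hbval]⟩
end
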